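/- Let D ⊂ ℝ³ be a countable set and L a line through the origin not meeting D. Then there exists a rotation ρ ∈ SO(3) about L such that the sets ρⁿD for n ≥ 0 are pairwise disjoint; consequently, setting A = ⋃_{n≥0} ρⁿD, one has ρ·A = A \ D. -/

import Mathlib

open scoped Pointwise

/-- `A` and `B` are `G`-equidecomposable: there are finite partitions
`A = A₁ ∪ … ∪ Aₙ` and `B = B₁ ∪ … ∪ Bₙ` into pairwise disjoint pieces and
`g₁, …, gₙ ∈ G` with `Bᵢ = gᵢ • Aᵢ`. -/
def Equidecomp' (G : Type*) {X : Type*} [Group G] [MulAction G X] (A B : Set X) : Prop :=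
  ∃ (n : ℕ) (P : Fin n → Set X) (g : Fin n → G),
    Pairwise (Function.onFun Disjoint P) ∧ (⋃ i, P i) = A ∧
    Pairwise (Function.onFun Disjoint fun i => g i • P i) ∧ (⋃ i, g i • P i) = B

/-- `E` is `G`-paradoxical: `E` is nonempty and splits into two disjoint pieces,
each `G`-equidecomposable with `E`. -/
def Paradoxical (G : Type*) {X : Type*} [Group G] [MulAction G X] (E : Set X) : Prop :=
  E.Nonempty ∧ ∃ A B : Set X, A ∪ B = E ∧ Disjoint A B ∧
    Equidecomp' G A E ∧ Equidecomp' G B E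

abbrev E3 : Type := EuclideanSpace ℝ (Fin 3)
abbrev SO3 : Type := Matrix.specialOrthogonalGroup (Fin 3) ℝ

noncomputable instance : Group SO3 :=
  { (inferInstance : Monoid SO3) with
    inv := fun A => ⟨star A.1, by
      refine ⟨Unitary.star_mem A.2.1, ?_⟩
      show (star A.1).det = 1
      have h : A.1.det = 1 := A.2.2
      rw [Matrix.star_eq_conjTranspose, Matrix.det_conjTranspose, h]
      simp⟩
    inv_mul_cancel := fun A => Subtype.ext (Matrix.mem_unitaryGroup_iff'.mp A.2.1) }

noncomputable instance : SMul SO3 E3 := ⟨fun g x => WithLp.toLp 2 (g.1.mulVec x)⟩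

/-- `SO3` acts on `ℝ³` by rotation (matrix-vector multiplication). -/
noncomputable instance : MulAction SO3 E3 where
  one_smul x := WithLp.ofLp_injective 2 (Matrix.one_mulVec x)
  mul_smul g h x := WithLp.ofLp_injective 2 (Matrix.mulVec_mulVec x g.1 h.1).symm

lemma SO3.smul_add (g : SO3) (x y : E3) : g • (x + y) = g • x + g • y :=
  WithLp.ofLp_injective 2 (Matrix.mulVec_add g.1 x y)

lemma SO3.smul_neg (g : SO3) (x : E3) : g • (-x) = -(g • x) :=
  WithLp.ofLp_injective 2 (Matrix.mulVec_neg x g.1)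

section AuxIrrationalRotation
open Matrix Real

noncomputable def rotM (θ : ℝ) : Matrix (Fin 3) (Fin 3) ℝ :=
  !![1,0,0; 0, Real.cos θ, -Real.sin θ; 0, Real.sin θ, Real.cos θ]

lemma rotM_mul (a b : ℝ) : rotM a * rotM b = rotM (a+b) := by
  ext i j
  fin_cases i <;> fin_cases j <;>
    simp [rotM, Matrix.mul_apply, Fin.sum_univ_three, Real.cos_add, Real.sin_add, Matrix.vecHead, Matrix.vecTail] <;> ring

lemma rotM_zero : rotM 0 = 1 := by
  ext i j; fin_cases i <;> fin_cases j <;> simp [rotM, Matrix.one_apply, Matrix.vecHead, Matrix.vecTail]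

lemma rotM_transpose (θ : ℝ) : (rotM θ)ᵀ = rotM (-θ) := by
  ext i j; fin_cases i <;> fin_cases j <;> simp [rotM, Matrix.vecHead, Matrix.vecTail]

lemma rotM_det (θ : ℝ) : (rotM θ).det = 1 := by
  simp [rotM, Matrix.det_fin_three]
  nlinarith [Real.sin_sq_add_cos_sq θ]

lemma rotM_fix {θ : ℝ} {y : Fin 3 → ℝ} (h : (rotM θ).mulVec y = y)
    (hy : y 1 ≠ 0 ∨ y 2 ≠ 0) : ∃ k : ℤ, θ = k * (2 * π) := by
  have h1 := congrFun h 1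
  have h2 := congrFun h 2
  simp [rotM, Matrix.mulVec, dotProduct, Fin.sum_univ_three, Matrix.vecHead,
    Matrix.vecTail] at h1 h2
  have hpos : 0 < y 1 ^ 2 + y 2 ^ 2 := by
    rcases hy with hy | hy <;> positivity
  have key : (Real.cos θ - 1) * (y 1 ^ 2 + y 2 ^ 2) = 0 := by
    linear_combination y 1 * h1 + y 2 * h2
  have hcos : Real.cos θ = 1 := by
    rcases mul_eq_zero.mp key with h | h
    · linarith
    · exact absurd h hpos.ne'
  obtain ⟨k, hk⟩ := Real.cos_eq_one_iff θ |>.mp hcos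
  exact ⟨k, hk.symm⟩

noncomputable def rho (B : Matrix (Fin 3) (Fin 3) ℝ) (θ : ℝ) : Matrix (Fin 3) (Fin 3) ℝ :=
  B * rotM θ * Bᵀ

variable {B : Matrix (Fin 3) (Fin 3) ℝ}

lemma B_mul_Bt (hB : Bᵀ * B = 1) : B * Bᵀ = 1 := mul_eq_one_comm.mp hB

lemma rho_mul (hB : Bᵀ * B = 1) (a b : ℝ) : rho B a * rho B b = rho B (a+b) := by
  unfold rho
  calc B * rotM a * Bᵀ * (B * rotM b * Bᵀ) = B * rotM a * (Bᵀ * B) * rotM b * Bᵀ := by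
        noncomm_ring
    _ = B * (rotM a * rotM b) * Bᵀ := by rw [hB]; noncomm_ring
    _ = B * rotM (a+b) * Bᵀ := by rw [rotM_mul]

lemma rho_zero (hB : Bᵀ * B = 1) : rho B 0 = 1 := by
  unfold rho; rw [rotM_zero, Matrix.mul_one, B_mul_Bt hB]

lemma rho_mem (hB : Bᵀ * B = 1) (θ : ℝ) :
    rho B θ ∈ Matrix.specialOrthogonalGroup (Fin 3) ℝ := by
  have hstar : (rho B θ)ᴴ = rho B (-θ) := by
    unfold rho
    rw [Matrix.conjTranspose_eq_transpose_of_trivial, Matrix.transpose_mul,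
      Matrix.transpose_mul, Matrix.transpose_transpose, rotM_transpose]
    noncomm_ring
  constructor
  · show rho B θ ∈ Matrix.unitaryGroup (Fin 3) ℝ
    rw [Matrix.mem_unitaryGroup_iff']
    show (rho B θ)ᴴ * rho B θ = 1
    rw [hstar, rho_mul hB, neg_add_cancel, rho_zero hB]
  · show (rho B θ).det = 1
    unfold rho
    rw [Matrix.det_mul, Matrix.det_mul, rotM_det, mul_one, ← Matrix.det_mul, B_mul_Bt hB,
      Matrix.det_one]

end AuxIrrationalRotation

open Matrix in
set_option maxHeartbeats 1000000 in
/-- Generalized irrational rotation: given a countable `D ⊂ ℝ³` and a line `L` through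
the origin (spanned by `u ≠ 0`) not meeting `D`, there is a rotation `ρ` about `L` whose
iterates `ρⁿ D` are pairwise disjoint; hence with `A = ⋃ₙ ρⁿ D` one has `ρ • A = A \ D`. -/
theorem generalized_irrational_rotation (D : Set E3) (hD : D.Countable)
    (u : E3) (hu : u ≠ 0) (hdisj : ∀ x ∈ D, x ∉ Submodule.span ℝ {u}) :
    ∃ ρ : SO3, (∀ x ∈ Submodule.span ℝ {u}, ρ • x = x) ∧
      Pairwise (Function.onFun Disjoint fun n : ℕ => ρ ^ n • D) ∧
      ρ • (⋃ n : ℕ, ρ ^ n • D) = (⋃ n : ℕ, ρ ^ n • D) \ D := by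
  classical
  set v : E3 := ‖u‖⁻¹ • u with hv_def
  have hvnorm : ‖v‖ = 1 := norm_smul_inv_norm hu
  -- orthonormal basis extending v
  have horth : Orthonormal ℝ (({0} : Set (Fin 3)).restrict (fun _ : Fin 3 => v)) := by
    constructor
    · intro i; exact hvnorm
    · intro i j hij
      exact absurd (Subtype.ext (i.2.trans j.2.symm)) hij
  have hcard : Module.finrank ℝ E3 = Fintype.card (Fin 3) := by
    simp [finrank_euclideanSpace]
  obtain ⟨b, hb⟩ := horth.exists_orthonormalBasis_extension_of_card_eq hcard
  have hb0 : b 0 = v := hb 0 rfl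
  set B : Matrix (Fin 3) (Fin 3) ℝ := Matrix.of (fun i j => b j i) with hB_def
  have hBtB : Bᵀ * B = 1 := by
    ext j k
    have hinner := orthonormal_iff_ite.mp b.orthonormal j k
    rw [PiLp.inner_apply] at hinner
    simp only [RCLike.inner_apply, starRingEnd_apply, star_trivial] at hinner
    simpa [Matrix.mul_apply, Matrix.one_apply, hB_def, mul_comm] using hinner
  -- basic computations
  have hBB : ∀ x : Fin 3 → ℝ, B.mulVec (Bᵀ.mulVec x) = x := by
    intro x
    rw [Matrix.mulVec_mulVec, B_mul_Bt hBtB, Matrix.one_mulVec]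
  have hBBinj : Function.Injective (B.mulVec) := by
    intro x y h
    have := congrArg (Bᵀ.mulVec) h
    rwa [Matrix.mulVec_mulVec, Matrix.mulVec_mulVec, hBtB, Matrix.one_mulVec,
      Matrix.one_mulVec] at this
  have hBv : ∀ y : Fin 3 → ℝ, B.mulVec y = y 0 • b 0 + y 1 • b 1 + y 2 • b 2 := by
    intro y
    funext i
    simp [Matrix.mulVec, dotProduct, Fin.sum_univ_three, hB_def, PiLp.add_apply,
      PiLp.smul_apply, smul_eq_mul]
    ring
  have hBtv : Bᵀ.mulVec v = Pi.single 0 1 := by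
    funext j
    have hinner := orthonormal_iff_ite.mp b.orthonormal j 0
    rw [PiLp.inner_apply] at hinner
    simp only [RCLike.inner_apply, starRingEnd_apply, star_trivial, hb0] at hinner
    simp only [Matrix.mulVec, dotProduct, Matrix.transpose_apply, hB_def,
      Matrix.of_apply]
    rw [show ∑ i, b j i * v i = if j = 0 then 1 else 0 by
      rw [← hinner]; exact Finset.sum_congr rfl fun i _ => mul_comm _ _]
    by_cases h : j = 0 <;> simp [h, Pi.single_apply]
  have hrot_single : ∀ θ : ℝ, (rotM θ).mulVec (Pi.single 0 1) = Pi.single 0 1 := by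
    intro θ
    funext i
    fin_cases i <;>
      simp [rotM, Matrix.mulVec, dotProduct, Fin.sum_univ_three, Pi.single_apply,
        Matrix.vecHead, Matrix.vecTail]
  have hrhoVec : ∀ θ (x : E3), (rho B θ).mulVec x = B.mulVec ((rotM θ).mulVec (Bᵀ.mulVec x)) := by
    intro θ x
    simp [rho, ← Matrix.mulVec_mulVec]
  have hrv : ∀ θ : ℝ, (rho B θ).mulVec v = v := by
    intro θ
    rw [hrhoVec, hBtv, hrot_single, ← hBtv, hBB]
  -- fixed point characterization
  have hfix : ∀ (θ : ℝ) (x : E3), x ∉ Submodule.span ℝ ({u} : Set E3) →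
      (rho B θ).mulVec x = x → ∃ k : ℤ, θ = k * (2 * Real.pi) := by
    intro θ x hx h
    set y := Bᵀ.mulVec x with hy_def
    have hyfix : (rotM θ).mulVec y = y := by
      apply hBBinj
      rw [← hrhoVec, h, hy_def, hBB]
    apply rotM_fix hyfix
    by_contra hc
    push_neg at hc
    apply hx
    have hxy : x = y 0 • v := by
      have : x = B.mulVec y := (hBB x ▸ rfl)
      apply WithLp.ofLp_injective 2
      rw [this, hBv, hc.1, hc.2, hb0]
      simp
    rw [Submodule.mem_span_singleton]
    exact ⟨y 0 * ‖u‖⁻¹, by rw [hxy, hv_def, mul_smul]⟩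
  -- composition of rho on vectors
  have hcomp : ∀ (a c : ℝ) (x : E3),
      (rho B a).mulVec ((rho B c).mulVec x) = (rho B (a + c)).mulVec x := by
    intro a c x
    rw [Matrix.mulVec_mulVec, rho_mul hBtB]
  -- the bad set
  set Bad : Set ℝ :=
    {θ | ∃ x ∈ D, ∃ y ∈ D, ∃ n : ℕ, 0 < n ∧ (rho B (n * θ)).mulVec x = y} with hBad_def
  have hBadC : Bad.Countable := by
    have hsub : Bad ⊆ ⋃ x ∈ D, ⋃ y ∈ D, ⋃ n : ℕ,
        {θ : ℝ | 0 < n ∧ (rho B (n * θ)).mulVec x = y} := by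
      intro θ hθ
      obtain ⟨x, hx, y, hy, n, hn, h⟩ := hθ
      exact Set.mem_biUnion hx (Set.mem_biUnion hy (Set.mem_iUnion.mpr ⟨n, hn, h⟩))
    refine Set.Countable.mono hsub ?_
    refine hD.biUnion fun x hx => hD.biUnion fun y hy => Set.countable_iUnion fun n => ?_
    by_cases hn : 0 < n
    · -- the set is contained in a coset of (2π/n)ℤ
      by_cases hne : {θ : ℝ | 0 < n ∧ (rho B (n * θ)).mulVec x = y}.Nonempty
      · obtain ⟨θ₀, -, hθ₀⟩ := hne
        refine Set.Countable.mono ?_ (Set.countable_range fun k : ℤ => θ₀ - k * (2 * Real.pi) / n)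
        rintro θ ⟨-, hθ⟩
        have hfixθ : (rho B (n * θ₀ - n * θ)).mulVec x = x :=
          calc (rho B (n * θ₀ - n * θ)).mulVec x
              = (rho B (-(n * θ))).mulVec ((rho B (n * θ₀)).mulVec x) := by
                rw [hcomp, show (-(n * θ) + n * θ₀ : ℝ) = n * θ₀ - n * θ by ring]
            _ = (rho B (-(n * θ))).mulVec ((rho B (n * θ)).mulVec x) := by rw [hθ₀, hθ]
            _ = x := by rw [hcomp, neg_add_cancel, rho_zero hBtB, Matrix.one_mulVec]
        obtain ⟨k, hk⟩ := hfix _ x (hdisj x hx) hfixθ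
        refine ⟨k, ?_⟩
        have hn' : (n : ℝ) ≠ 0 := Nat.cast_ne_zero.mpr hn.ne'
        field_simp
        nlinarith [hk]
      · rw [Set.not_nonempty_iff_eq_empty] at hne
        rw [hne]; exact Set.countable_empty
    · have : {θ : ℝ | 0 < n ∧ (rho B (n * θ)).mulVec x = y} = ∅ := by
        ext θ; simp [hn]
      rw [this]; exact Set.countable_empty
  obtain ⟨θ, hθ⟩ : ∃ θ : ℝ, θ ∉ Bad := by
    by_contra h
    push_neg at h
    exact Set.not_countable_univ (Set.eq_univ_of_forall h ▸ hBadC)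
  -- the rotation
  set ρ : SO3 := ⟨rho B θ, rho_mem hBtB θ⟩ with hρ_def
  have hpow : ∀ n : ℕ, (ρ ^ n : SO3).1 = rho B (n * θ) := by
    intro n
    induction n with
    | zero => simpa using (rho_zero hBtB).symm
    | succ k ih =>
      rw [pow_succ]
      show (ρ ^ k).1 * ρ.1 = _
      rw [ih, hρ_def, rho_mul hBtB]
      push_cast
      ring_nf
  have hsmul_pow : ∀ (n : ℕ) (x : E3), (ρ ^ n) • x = WithLp.toLp 2 ((rho B (n * θ)).mulVec x) := by
    intro n x
    show WithLp.toLp 2 ((ρ ^ n).1.mulVec x) = _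
    rw [hpow n]
  have hdisjD : ∀ n : ℕ, 0 < n → Disjoint D (ρ ^ n • D) := by
    intro n hn
    rw [Set.disjoint_left]
    intro z hz hz'
    obtain ⟨x, hx, hxz⟩ := hz'
    have hxz' : (rho B (n * θ)).mulVec x = z := by
      have := congrArg WithLp.ofLp ((hsmul_pow n x).symm.trans hxz); exact this
    exact hθ ⟨x, hx, z, hz, n, hn, hxz'⟩
  have hpair : Pairwise (Function.onFun Disjoint fun n : ℕ => ρ ^ n • D) := by
    have key : ∀ m n : ℕ, m < n → Disjoint (ρ ^ m • D) (ρ ^ n • D) := by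
      intro m n hmn
      have h1 : ρ ^ n • D = ρ ^ m • (ρ ^ (n - m) • D) := by
        rw [smul_smul, ← pow_add, Nat.add_sub_cancel' hmn.le]
      rw [h1]; refine Set.disjoint_smul_set.mpr ?_
      exact hdisjD (n - m) (Nat.sub_pos_of_lt hmn)
    intro m n hmn
    rcases hmn.lt_or_gt with h | h
    · exact key m n h
    · exact (key n m h).symm
  refine ⟨ρ, ?_, hpair, ?_⟩
  · intro x hx
    obtain ⟨c, rfl⟩ := Submodule.mem_span_singleton.mp hx
    have hru : (rho B θ).mulVec u = u := by
      have h1 : u = ‖u‖ • v := (smul_inv_smul₀ (norm_ne_zero_iff.mpr hu) u).symm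
      calc (rho B θ).mulVec u = (rho B θ).mulVec (‖u‖ • v) := congrArg (fun w : E3 => (rho B θ).mulVec w) h1
        _ = ‖u‖ • (rho B θ).mulVec v := by rw [WithLp.ofLp_smul, Matrix.mulVec_smul]
        _ = ‖u‖ • v := by rw [hrv]
        _ = u := (congrArg WithLp.ofLp h1).symm
    apply WithLp.ofLp_injective 2
    show (rho B θ).mulVec (c • WithLp.ofLp u) = c • WithLp.ofLp u
    rw [Matrix.mulVec_smul, hru]
  · have h1 : ρ • (⋃ n : ℕ, ρ ^ n • D) = ⋃ n : ℕ, ρ ^ (n + 1) • D := by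
      refine (Set.smul_set_iUnion _ _).trans ?_
      exact Set.iUnion_congr fun n => by rw [pow_succ']; exact smul_smul _ _ _
    rw [h1]
    ext z
    simp only [Set.mem_iUnion, Set.mem_diff]
    constructor
    · rintro ⟨n, hz⟩
      refine ⟨⟨n + 1, hz⟩, fun hzD => ?_⟩
      exact Set.disjoint_left.mp (hdisjD (n + 1) n.succ_pos) hzD hz
    · rintro ⟨⟨n, hz⟩, hzD⟩
      match n with
      | 0 =>
        rw [pow_zero, one_smul] at hz
        exact absurd hz hzD
      | k + 1 => exact ⟨k, hz⟩
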